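/- Let R be a commutative local ring with maximal ideal M and suppose {x₁, x₂, x₃} extends to a minimal generating set of M with at least 3 elements. Then M + ⟨xᵢ⟩ is a prime ideal for each i, but ⟨xᵢ⟩ + ⟨xⱼ⟩ is not a prime ideal for distinct i, j ∈ {1,2,3}. -/

import Mathlib

theorem stmt_4 {R : Type*} [CommRing R] [IsLocalRing R] [IsArtinianRing R]
    (m : ℕ) (hm : 3 ≤ m) (x : Fin m → R)
    (hspan : IsLocalRing.maximalIdeal R = Ideal.span (Set.range x))
    (hmin : ∀ i : Fin m, x i ∉ Ideal.span (x '' {j | j ≠ i})) :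
    (∀ i : Fin m, (i : ℕ) < 3 →
        (IsLocalRing.maximalIdeal R + Ideal.span {x i}).IsPrime) ∧
      (∀ i j : Fin m, (i : ℕ) < 3 → (j : ℕ) < 3 → i ≠ j →
        ¬(Ideal.span {x i} + Ideal.span {x j}).IsPrime) := by
  have hmem : ∀ i : Fin m, x i ∈ IsLocalRing.maximalIdeal R := by
    intro i
    rw [hspan]
    exact Ideal.subset_span ⟨i, rfl⟩
  constructor
  · intro i _
    have h : IsLocalRing.maximalIdeal R + Ideal.span {x i} =
        IsLocalRing.maximalIdeal R := by
      rw [Ideal.add_eq_sup, sup_eq_left, Ideal.span_le, Set.singleton_subset_iff]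
      exact hmem i
    rw [h]
    exact (IsLocalRing.maximalIdeal.isMaximal R).isPrime
  · intro i j hi hj hij hP
    have hvne : (i : ℕ) ≠ (j : ℕ) := fun h => hij (Fin.ext h)
    obtain ⟨k, hki, hkj⟩ : ∃ k : Fin m, k ≠ i ∧ k ≠ j := by
      refine ⟨⟨if (i : ℕ) ≠ 0 ∧ (j : ℕ) ≠ 0 then 0
        else if (i : ℕ) ≠ 1 ∧ (j : ℕ) ≠ 1 then 1 else 2, by split_ifs <;> omega⟩, ?_, ?_⟩ <;>
      · simp only [Ne, Fin.ext_iff]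
        split_ifs <;> omega
    have hPmax : (Ideal.span {x i} + Ideal.span {x j}).IsMaximal :=
      by haveI := hP; exact IsArtinianRing.isMaximal_of_isPrime _
    have hPM : Ideal.span {x i} + Ideal.span {x j} = IsLocalRing.maximalIdeal R :=
      IsLocalRing.eq_maximalIdeal hPmax
    apply hmin k
    have hle : Ideal.span {x i} + Ideal.span {x j} ≤ Ideal.span (x '' {j' | j' ≠ k}) := by
      rw [Ideal.add_eq_sup, sup_le_iff]
      constructor <;> rw [Ideal.span_le, Set.singleton_subset_iff]
      · exact Ideal.subset_span ⟨i, fun h => hki h.symm, rfl⟩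
      · exact Ideal.subset_span ⟨j, fun h => hkj h.symm, rfl⟩
    exact hle (hPM ▸ hmem k)
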